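/- Let p : ℝ^n → ℝ be a polynomial function of degree d whose Hessian determinant h_p(x) = det(∇²p(x)) is not identically zero on ℝ^n. Then there exists a point a ∈ ℤ^n with all coordinates in {0, 1, …, d·n} such that det(∇²p(a)) ≠ 0. -/

import Mathlib

/-- The Hessian matrix of a function `p : ℝⁿ → ℝ` at a point `x`,
whose `(i,j)` entry is the second partial derivative `∂²p/∂xᵢ∂xⱼ (x)`. -/
noncomputable def hess {n : ℕ} (p : EuclideanSpace ℝ (Fin n) → ℝ)
    (x : EuclideanSpace ℝ (Fin n)) : Matrix (Fin n) (Fin n) ℝ :=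
  Matrix.of fun i j =>
    fderiv ℝ (fun y => fderiv ℝ p y (EuclideanSpace.single j 1)) x (EuclideanSpace.single i 1)

open MvPolynomial

lemma hasFDerivAt_mveval {n : ℕ} (q : MvPolynomial (Fin n) ℝ) (x : EuclideanSpace ℝ (Fin n)) :
    HasFDerivAt (fun y : EuclideanSpace ℝ (Fin n) => eval (fun i => y i) q)
      (∑ i, eval (fun i => x i) (pderiv i q) •
        (EuclideanSpace.proj i : EuclideanSpace ℝ (Fin n) →L[ℝ] ℝ)) x := by
  induction q using MvPolynomial.induction_on with
  | C a =>
      simp only [eval_C, pderiv_C, map_zero, zero_smul, Finset.sum_const_zero]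
      exact hasFDerivAt_const a x
  | add f g hf hg =>
      simp only [map_add, add_smul, Finset.sum_add_distrib, eval_add]
      exact hf.add hg
  | mul_X f j hf =>
      have hd : HasFDerivAt (fun y : EuclideanSpace ℝ (Fin n) => y j)
          (EuclideanSpace.proj j : EuclideanSpace ℝ (Fin n) →L[ℝ] ℝ) x :=
        by simpa using (EuclideanSpace.proj j : EuclideanSpace ℝ (Fin n) →L[ℝ] ℝ).hasFDerivAt (x := x)
      have h := hf.mul hd
      simp only [eval_mul, eval_X]
      refine h.congr_fderiv (Eq.symm ?_)
      classical
      have : ∀ i : Fin n, pderiv i (f * X j) = pderiv i f * X j + f * pderiv i (X j) :=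
        fun i => pderiv_mul
      simp only [this, map_add, eval_mul, eval_X, add_smul, Finset.sum_add_distrib]
      rw [add_comm]
      congr 1
      · have h2 : ∀ i : Fin n,
            eval (fun k => x k) (pderiv i (X j : MvPolynomial (Fin n) ℝ))
              = if j = i then 1 else 0 := by
          intro i
          rw [pderiv_X]
          simp [Pi.single_apply]
        simp only [h2, mul_ite, mul_one, mul_zero, ite_smul, zero_smul]
        rw [Finset.sum_ite_eq]
        simp
      · rw [Finset.smul_sum]
        congr 1
        ext i
        rw [smul_smul, mul_comm]

lemma sum_smul_proj_apply {n : ℕ} (c : Fin n → ℝ) (j : Fin n) :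
    (∑ i, c i • (EuclideanSpace.proj i : EuclideanSpace ℝ (Fin n) →L[ℝ] ℝ))
      (EuclideanSpace.single j 1) = c j := by
  classical
  simp [ContinuousLinearMap.sum_apply, EuclideanSpace.single_apply,
    Finset.sum_ite_eq' Finset.univ j]

lemma fderiv_mveval {n : ℕ} (q : MvPolynomial (Fin n) ℝ) (x : EuclideanSpace ℝ (Fin n))
    (j : Fin n) :
    fderiv ℝ (fun y : EuclideanSpace ℝ (Fin n) => eval (fun i => y i) q) x
        (EuclideanSpace.single j 1) = eval (fun i => x i) (pderiv j q) := by
  rw [(hasFDerivAt_mveval q x).fderiv]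
  exact sum_smul_proj_apply _ j

lemma hess_eq {n : ℕ} (q : MvPolynomial (Fin n) ℝ) (x : EuclideanSpace ℝ (Fin n)) :
    hess (fun y => eval (fun i => y i) q) x
      = Matrix.of fun i j => eval (fun k => x k) (pderiv i (pderiv j q)) := by
  ext i j
  show fderiv ℝ (fun y =>
      fderiv ℝ (fun z : EuclideanSpace ℝ (Fin n) => eval (fun k => z k) q) y
        (EuclideanSpace.single j 1)) x (EuclideanSpace.single i 1) = _
  have h1 : (fun y : EuclideanSpace ℝ (Fin n) =>
      fderiv ℝ (fun z : EuclideanSpace ℝ (Fin n) => eval (fun k => z k) q) y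
        (EuclideanSpace.single j 1))
      = fun y : EuclideanSpace ℝ (Fin n) => eval (fun k => y k) (pderiv j q) := by
    funext y
    exact fderiv_mveval q y j
  rw [h1, fderiv_mveval]
  rfl

lemma totalDegree_pderiv_le {n : ℕ} (i : Fin n) (f : MvPolynomial (Fin n) ℝ) :
    (pderiv i f).totalDegree ≤ f.totalDegree := by
  classical
  conv_lhs => rw [f.as_sum]
  rw [map_sum]
  refine MvPolynomial.totalDegree_finsetSum_le fun v hv => ?_
  rw [pderiv_monomial]
  refine (totalDegree_monomial_le _ _).trans ?_
  refine le_trans ?_ (MvPolynomial.le_totalDegree hv)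
  rw [Finsupp.sum_fintype _ _ (fun _ => rfl), Finsupp.sum_fintype _ _ (fun _ => rfl)]
  exact Finset.sum_le_sum fun k _ => by simp [tsub_le_self]

lemma grid_lemma : ∀ (n : ℕ) (Q : MvPolynomial (Fin n) ℝ), Q ≠ 0 → ∀ D : ℕ,
    Q.totalDegree ≤ D → ∃ a : Fin n → ℕ, (∀ i, a i ≤ D) ∧
      eval (fun i => (a i : ℝ)) Q ≠ 0 := by
  intro n
  induction n with
  | zero =>
      intro Q hQ D _
      obtain ⟨c, rfl⟩ := MvPolynomial.C_surjective (Fin 0) Q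
      refine ⟨fun i => 0, fun i => Nat.zero_le _, ?_⟩
      rw [eval_C]
      intro hc
      exact hQ (by rw [hc, map_zero])
  | succ n IH =>
      intro Q hQ D hD
      set P : Polynomial (MvPolynomial (Fin n) ℝ) := finSuccEquiv ℝ n Q with hP
      have hPne : P ≠ 0 := by
        intro h
        apply hQ
        apply (finSuccEquiv ℝ n).injective
        rw [← hP, h, map_zero]
      have hPdeg : P.natDegree ≤ D := by
        rw [hP, natDegree_finSuccEquiv]
        exact (Q.degreeOf_le_totalDegree 0).trans hD
      -- find j ≤ D with P.eval (C j) ≠ 0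
      have hj : ∃ j : ℕ, j ≤ D ∧ P.eval (MvPolynomial.C (j : ℝ)) ≠ 0 := by
        by_contra hc
        push_neg at hc
        have : P = 0 := by
          refine Polynomial.eq_zero_of_natDegree_lt_card_of_eval_eq_zero P
            (f := fun j : Fin (D + 1) => MvPolynomial.C ((j : ℕ) : ℝ)) ?_ ?_ ?_
          · intro a b hab
            have := MvPolynomial.C_injective (Fin n) ℝ hab
            exact Fin.ext (Nat.cast_injective this)
          · intro j
            exact hc j (Nat.lt_succ_iff.mp j.isLt)
          · simpa using Nat.lt_succ_of_le hPdeg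
        exact hPne this
      obtain ⟨j, hjD, hjne⟩ := hj
      set R : MvPolynomial (Fin n) ℝ := P.eval (MvPolynomial.C (j : ℝ)) with hR
      have hRdeg : R.totalDegree ≤ D := by
        rw [hR, Polynomial.eval_eq_sum_range]
        refine MvPolynomial.totalDegree_finsetSum_le fun k hk => ?_
        refine (MvPolynomial.totalDegree_mul _ _).trans ?_
        have h2 : (MvPolynomial.C ((j : ℝ)) ^ k :
            MvPolynomial (Fin n) ℝ).totalDegree = 0 := by
          rw [← MvPolynomial.C_pow, MvPolynomial.totalDegree_C]
        rw [h2, add_zero]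
        rcases eq_or_ne (P.coeff k) 0 with h0 | h0
        · simp [h0]
        · have h1 := totalDegree_coeff_finSuccEquiv_add_le Q k (by rwa [← hP])
          rw [← hP] at h1
          exact le_trans (le_trans (Nat.le_add_right _ k) h1) hD
      obtain ⟨s, hsD, hsne⟩ := IH R (fun h => hjne (by rwa [hR] at h)) D hRdeg
      refine ⟨Fin.cons j s, ?_, ?_⟩
      · intro i
        refine Fin.cases ?_ ?_ i
        · simpa using hjD
        · intro k; simpa using hsD k
      · have hfun : (fun i : Fin (n + 1) => ((Fin.cons j s : Fin (n + 1) → ℕ) i : ℝ))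
            = Fin.cons ((j : ℝ)) (fun i => (s i : ℝ)) := by
          funext i
          refine Fin.cases ?_ ?_ i <;> simp
        rw [hfun, eval_eq_eval_mv_eval']
        rw [Polynomial.eval_map]
        have key := Polynomial.eval₂_at_apply (p := P)
          (MvPolynomial.eval fun i => ((s i : ℕ) : ℝ)) (MvPolynomial.C ((j : ℕ) : ℝ))
        rw [eval_C] at key
        rw [← hP, key]
        exact hsne

/-- If the Hessian determinant of a polynomial function of degree `d`
is not identically zero, then it is nonzero at some integer point with coordinates
in `{0, 1, …, d·n}`. -/
theorem hessian_det_nonzero_at_small_point {n d : ℕ}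
    (p : EuclideanSpace ℝ (Fin n) → ℝ)
    (q : MvPolynomial (Fin n) ℝ)
    (hpq : ∀ x, p x = MvPolynomial.eval (fun i => x i) q)
    (hdeg : q.totalDegree = d)
    (hdet : ¬ ∀ x, (hess p x).det = 0) :
    ∃ a : Fin n → ℕ, (∀ i, a i ≤ d * n) ∧
      (hess p (WithLp.toLp 2 (fun i => (a i : ℝ)) : EuclideanSpace ℝ (Fin n))).det ≠ 0 := by
  classical
  have hp : p = fun y => eval (fun i => y i) q := funext hpq
  subst hp
  set Qd : MvPolynomial (Fin n) ℝ :=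
    (Matrix.of fun i j => pderiv i (pderiv j q)).det with hQd
  have hdet_eq : ∀ x : EuclideanSpace ℝ (Fin n),
      (hess (fun y => eval (fun i => y i) q) x).det = eval (fun k => x k) Qd := by
    intro x
    rw [hess_eq q x, hQd, RingHom.map_det]
    rfl
  push_neg at hdet
  obtain ⟨x0, hx0⟩ := hdet
  have hQne : Qd ≠ 0 := fun h => hx0 (by rw [hdet_eq, h, map_zero])
  have hQdeg : Qd.totalDegree ≤ d * n := by
    rw [hQd, Matrix.det_apply]
    refine totalDegree_finsetSum_le fun σ _ => ?_
    have hsmul : ∀ (u : ℤˣ) (f : MvPolynomial (Fin n) ℝ),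
        (u • f).totalDegree ≤ f.totalDegree := by
      intro u f
      rcases Int.units_eq_one_or u with rfl | rfl
      · rw [one_smul]
      · have : (-1 : ℤˣ) • f = -f := by
          rw [Units.smul_def]
          norm_num
        rw [this, MvPolynomial.totalDegree_neg]
    refine (hsmul _ _).trans ?_
    refine (MvPolynomial.totalDegree_finset_prod _ _).trans ?_
    have : ∀ i : Fin n,
        ((Matrix.of fun i j => pderiv i (pderiv j q)) (σ i) i).totalDegree ≤ d := by
      intro i
      exact le_trans (totalDegree_pderiv_le _ _)
        (le_trans (totalDegree_pderiv_le _ _) hdeg.le)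
    refine le_trans (Finset.sum_le_sum fun i _ => this i) ?_
    simp [mul_comm]
  obtain ⟨a, haD, hane⟩ := grid_lemma n Qd hQne (d * n) hQdeg
  exact ⟨a, haD, by rw [hdet_eq]; exact hane⟩
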